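/- With the path-word map P as above extended to binary planar forests (a forest is an ordered tuple of binary trees, with P(f)_i being the path word from the root of the tree containing leaf i to leaf i), let p and q be forests each with m leaves, and let σ be a cyclic rotation in the cyclic subgroup Z/mZ of the symmetric group S_m. If P(p)_i = P(q)_{σ(i)} for all i, then p and q have the same number of roots n, and there exists a ≥ 0 such that for every 1 ≤ j ≤ n the j-th tree of p equals the (j+a mod n)-th tree of q. -/

import Mathlib

/-- Binary planar trees. -/
inductive BTree
  | leaf : BTree
  | node : BTree → BTree → BTree
deriving DecidableEq

namespace BTree

/-- The free group F₂ = ⟨a,b⟩. -/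
abbrev F2 := FreeGroup (Fin 2)

def a : F2 := FreeGroup.of 0
def b : F2 := FreeGroup.of 1

/-- Path words of a binary planar tree, indexed by its leaves from left to right. -/
def pathWords : BTree → List F2
  | leaf => [1]
  | node l r => (pathWords l).map (· * a) ++ (pathWords r).map (· * b)

/-- A binary planar forest is an ordered list of binary planar trees; its path words are
the path words of its trees, computed within each tree, leaves numbered left to right. -/
def forestWords (f : List BTree) : List F2 := (f.map pathWords).flatten

end BTree

open BTree

/-! ### Auxiliary material -/

namespace BTreeAux

/-- a word is all-`true` (corresponds to a power of `b`). -/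
def allb (w : List Bool) : Prop := ∀ x ∈ w, x = true

/-- path words as plain boolean lists: `false` = went left (`a`), `true` = went right (`b`). -/
def pw : BTree → List (List Bool)
  | .leaf => [[]]
  | .node l r => (pw l).map (· ++ [false]) ++ (pw r).map (· ++ [true])

lemma pw_ne_nil (t : BTree) : pw t ≠ [] := by
  cases t with
  | leaf => simp [pw]
  | node l r => simp [pw, pw_ne_nil l]

lemma pw_structure (t : BTree) :
    ∃ ws w, pw t = ws ++ [w] ∧ allb w ∧ ∀ u ∈ ws, ¬ allb u := by
  induction t with
  | leaf => exact ⟨[], [], rfl, by simp [allb], by simp⟩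
  | node l r ihl ihr =>
    obtain ⟨ws, w, hr, hw, hws⟩ := ihr
    refine ⟨(pw l).map (· ++ [false]) ++ ws.map (· ++ [true]), w ++ [true], ?_, ?_, ?_⟩
    · simp [pw, hr]
    · intro x hx
      rcases List.mem_append.1 hx with hx | hx
      · exact hw x hx
      · simpa using hx
    · intro u hu
      rcases List.mem_append.1 hu with hu | hu
      · obtain ⟨v, _, rfl⟩ := List.mem_map.1 hu
        intro hall
        have := hall false (by simp)
        simp at this
      · obtain ⟨v, hv, rfl⟩ := List.mem_map.1 hu
        intro hall
        exact hws v hv (fun x hx => hall x (by simp [hx]))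

/-- Splitting an equality of appended lists when the parts are separated by a predicate. -/
lemma append_split {α : Type*} (P : α → Prop) :
    ∀ (A C B D : List α), (∀ u ∈ A, P u) → (∀ u ∈ B, ¬P u) →
      (∀ u ∈ C, P u) → (∀ u ∈ D, ¬P u) → A ++ B = C ++ D → A = C ∧ B = D := by
  intro A
  induction A with
  | nil =>
    intro C B D _ hB hC _ heq
    cases C with
    | nil => simpa using heq
    | cons c C' =>
      exfalso
      simp only [List.nil_append, List.cons_append] at heq
      exact hB c (heq ▸ List.mem_cons_self) (hC c (List.mem_cons_self))
  | cons a A' ih =>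
    intro C B D hA hB hC hD heq
    cases C with
    | nil =>
      exfalso
      simp only [List.nil_append, List.cons_append] at heq
      exact hD a (heq ▸ List.mem_cons_self) (hA a (List.mem_cons_self))
    | cons c C' =>
      simp only [List.cons_append, List.cons.injEq] at heq
      obtain ⟨rfl, heq⟩ := heq
      obtain ⟨h1, h2⟩ := ih C' B D (fun u hu => hA u (List.mem_cons_of_mem _ hu)) hB
        (fun u hu => hC u (List.mem_cons_of_mem _ hu)) hD heq
      exact ⟨by rw [h1], h2⟩

/-- Splitting at the first element satisfying a predicate. -/
lemma first_sat {α : Type*} (P : α → Prop) :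
    ∀ (a b : List α) (x y : α) (A B : List α), (∀ u ∈ a, ¬P u) → (∀ u ∈ b, ¬P u) →
      P x → P y → a ++ x :: A = b ++ y :: B → a = b ∧ x = y ∧ A = B := by
  intro a
  induction a with
  | nil =>
    intro b x y A B _ hb hx hy heq
    cases b with
    | nil => simpa using heq
    | cons c b' =>
      simp only [List.nil_append, List.cons_append, List.cons.injEq] at heq
      exact absurd (heq.1 ▸ hx) (hb c (List.mem_cons_self))
  | cons c a' ih =>
    intro b x y A B ha hb hx hy heq
    cases b with
    | nil =>
      simp only [List.nil_append, List.cons_append, List.cons.injEq] at heq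
      exact absurd (heq.1 ▸ hy) (ha c (List.mem_cons_self))
    | cons d b' =>
      simp only [List.cons_append, List.cons.injEq] at heq
      obtain ⟨rfl, heq⟩ := heq
      obtain ⟨h1, h2, h3⟩ := ih b' x y A B (fun u hu => ha u (List.mem_cons_of_mem _ hu))
        (fun u hu => hb u (List.mem_cons_of_mem _ hu)) hx hy heq
      exact ⟨by rw [h1], h2, h3⟩

lemma pw_injective : ∀ {s t : BTree}, pw s = pw t → s = t := by
  intro s
  induction s with
  | leaf =>
    intro t h
    cases t with
    | leaf => rfl
    | node l r =>
      exfalso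
      have : ([] : List Bool) ∈ pw (.node l r) := h ▸ by simp [pw]
      simp only [pw, List.mem_append, List.mem_map] at this
      rcases this with ⟨v, _, hv⟩ | ⟨v, _, hv⟩ <;> simp at hv
  | node l r ihl ihr =>
    intro t h
    cases t with
    | leaf =>
      exfalso
      have : ([] : List Bool) ∈ pw (.node l r) := h.symm ▸ by simp [pw]
      simp only [pw, List.mem_append, List.mem_map] at this
      rcases this with ⟨v, _, hv⟩ | ⟨v, _, hv⟩ <;> simp at hv
    | node l' r' =>
      simp only [pw] at h
      have key := append_split (fun u : List Bool => u.getLast? = some false)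
        ((pw l).map (· ++ [false])) ((pw l').map (· ++ [false]))
        ((pw r).map (· ++ [true])) ((pw r').map (· ++ [true]))
        (by rintro u hu; obtain ⟨v, _, rfl⟩ := List.mem_map.1 hu; simp)
        (by rintro u hu; obtain ⟨v, _, rfl⟩ := List.mem_map.1 hu; simp)
        (by rintro u hu; obtain ⟨v, _, rfl⟩ := List.mem_map.1 hu; simp)
        (by rintro u hu; obtain ⟨v, _, rfl⟩ := List.mem_map.1 hu; simp)
        h
      have hinj : ∀ x : Bool, Function.Injective (· ++ [x] : List Bool → List Bool) :=
        fun x u v huv => by simpa using huv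
      have hl : l = l' := ihl (List.map_injective_iff.2 (hinj false) key.1)
      have hr : r = r' := ihr (List.map_injective_iff.2 (hinj true) key.2)
      rw [hl, hr]

lemma flatten_pw_eq_nil {q : List BTree} (h : (q.map pw).flatten = []) : q = [] := by
  cases q with
  | nil => rfl
  | cons t q' =>
    exfalso
    simp only [List.map_cons, List.flatten_cons, List.append_eq_nil_iff] at h
    exact pw_ne_nil t h.1

lemma flatten_pw_injective : ∀ (p q : List BTree),
    (p.map pw).flatten = (q.map pw).flatten → p = q := by
  intro p
  induction p with
  | nil =>
    intro q h
    exact (flatten_pw_eq_nil h.symm).symm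
  | cons t p' ih =>
    intro q h
    cases q with
    | nil =>
      exact absurd (flatten_pw_eq_nil (q := t :: p') (by rw [h]; simp)) (by simp)
    | cons s q' =>
      simp only [List.map_cons, List.flatten_cons] at h
      obtain ⟨ws, w, hpt, hw, hws⟩ := pw_structure t
      obtain ⟨ws', w', hps, hw', hws'⟩ := pw_structure s
      rw [hpt, hps] at h
      have h' : ws ++ w :: (p'.map pw).flatten = ws' ++ w' :: (q'.map pw).flatten := by
        simpa [List.append_assoc] using h
      obtain ⟨h1, h2, h3⟩ := first_sat allb ws ws' w w' _ _ hws hws' hw hw' h'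
      have hts : t = s := pw_injective (by rw [hpt, hps, h1, h2])
      rw [hts, ih q' h3]

lemma boundary_split : ∀ (q : List BTree) (X Y : List (List Bool)),
    (q.map pw).flatten = X ++ Y →
    (X = [] ∨ ∃ w, X.getLast? = some w ∧ allb w) →
    ∃ q₁ q₂, q = q₁ ++ q₂ ∧ X = (q₁.map pw).flatten ∧ Y = (q₂.map pw).flatten := by
  intro q
  induction q with
  | nil =>
    intro X Y heq _
    obtain ⟨hX, hY⟩ := List.append_eq_nil_iff.1 (by simpa using heq.symm)
    exact ⟨[], [], rfl, by simp [hX], by simp [hY]⟩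
  | cons t q' ih =>
    intro X Y heq hcond
    rcases hcond with rfl | ⟨w, hwX, hw⟩
    · exact ⟨[], t :: q', rfl, rfl, by simpa using heq.symm⟩
    have hXne : X ≠ [] := by rintro rfl; simp at hwX
    simp only [List.map_cons, List.flatten_cons] at heq
    rcases List.append_eq_append_iff.1 heq with ⟨a', ha1, ha2⟩ | ⟨c', hc1, hc2⟩
    · -- X = pw t ++ a'
      have hcond' : a' = [] ∨ ∃ w, a'.getLast? = some w ∧ allb w := by
        rcases eq_or_ne a' [] with rfl | ha'
        · exact Or.inl rfl
        · refine Or.inr ⟨w, ?_, hw⟩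
          rw [ha1, List.getLast?_append_of_ne_nil _ ha'] at hwX
          exact hwX
      obtain ⟨q₁, q₂, hq, hX1, hY1⟩ := ih a' Y ha2 hcond'
      exact ⟨t :: q₁, q₂, by rw [hq, List.cons_append], by simp [ha1, hX1], hY1⟩
    · -- pw t = X ++ c'
      rcases eq_or_ne c' [] with rfl | hc'
      · rw [List.append_nil] at hc1
        exact ⟨[t], q', rfl, by simp [← hc1], by simpa using hc2⟩
      · exfalso
        obtain ⟨ws, w₀, hpt, _, hws⟩ := pw_structure t
        have hlen : X.length ≤ ws.length := by
          have := congrArg List.length hc1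
          simp only [List.length_append, hpt, List.length_append, List.length_singleton] at this
          have hc'len : 1 ≤ c'.length := by
            cases c' with
            | nil => exact absurd rfl hc'
            | cons _ _ => simp
          omega
        have hXtake : X = ws.take X.length := by
          have h1 : X = (X ++ c').take X.length := by rw [List.take_left]
          rw [← hc1, hpt, List.take_append_of_le_length hlen] at h1
          exact h1
        have hwmem : w ∈ X := by
          obtain ⟨hne, hwl⟩ := List.mem_getLast?_eq_getLast hwX
          exact hwl ▸ List.getLast_mem hne
        have : w ∈ ws := List.take_subset _ _ (hXtake ▸ hwmem)
        exact hws w this hw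

lemma flatten_getLast (p : List BTree) (hp : p ≠ []) :
    ∃ w, ((p.map pw).flatten).getLast? = some w ∧ allb w := by
  obtain ⟨p', t, rfl⟩ := List.eq_nil_or_concat p |>.resolve_left hp
  obtain ⟨ws, w, hpt, hw, _⟩ := pw_structure t
  refine ⟨w, ?_, hw⟩
  rw [List.concat_eq_append, List.map_append, List.flatten_append]
  simp only [List.map_cons, List.map_nil, List.flatten_cons, List.flatten_nil,
    List.append_nil, hpt]
  rw [← List.append_assoc]
  exact List.getLast?_concat

/-! ### relation to `pathWords` -/

lemma reduce_pos (L : List (Fin 2 × Bool)) (h : ∀ p ∈ L, p.2 = true) :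
    FreeGroup.reduce L = L := by
  induction L with
  | nil => rfl
  | cons x L ih =>
    have hL := ih (fun p hp => h p (List.mem_cons_of_mem _ hp))
    rw [FreeGroup.reduce.cons, hL]
    cases L with
    | nil => rfl
    | cons y t =>
      have hx : x.2 = true := h x (List.mem_cons_self)
      have hy : y.2 = true := h y (List.mem_cons_of_mem _ (List.mem_cons_self))
      simp [hx, hy]

def emb (w : List Bool) : F2 :=
  FreeGroup.mk (w.map fun x => ((if x then 1 else 0 : Fin 2), true))

lemma emb_injective : Function.Injective emb := by
  intro w₁ w₂ h
  have h2 := FreeGroup.reduce.sound h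
  rw [reduce_pos _ (by simp), reduce_pos _ (by simp)] at h2
  have hinj : Function.Injective (fun x : Bool => ((if x then 1 else 0 : Fin 2), true)) := by
    intro x y hxy
    cases x <;> cases y <;> simp_all
  exact List.map_injective_iff.2 hinj h2

lemma emb_append_false (w : List Bool) : emb (w ++ [false]) = emb w * a := by
  simp only [emb, List.map_append, List.map_cons, List.map_nil, if_neg Bool.false_ne_true]
  rw [← FreeGroup.mul_mk]
  rfl

lemma emb_append_true (w : List Bool) : emb (w ++ [true]) = emb w * b := by
  simp only [emb, List.map_append, List.map_cons, List.map_nil, if_pos rfl]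
  rw [← FreeGroup.mul_mk]
  rfl

lemma pathWords_eq_map_emb (t : BTree) : pathWords t = (pw t).map emb := by
  induction t with
  | leaf =>
    show [1] = [emb []]
    simp [emb, FreeGroup.one_eq_mk]
  | node l r ihl ihr =>
    simp only [pathWords, pw, ihl, ihr, List.map_append, List.map_map]
    congr 1
    · apply List.map_congr_left
      intro w _
      exact (emb_append_false w).symm
    · apply List.map_congr_left
      intro w _
      exact (emb_append_true w).symm

lemma forestWords_eq_map_emb (f : List BTree) :
    forestWords f = ((f.map pw).flatten).map emb := by
  rw [forestWords, List.map_flatten, List.map_map]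
  congr 1
  apply List.map_congr_left
  intro t _
  exact pathWords_eq_map_emb t

end BTreeAux

open BTreeAux

theorem stmt1 (p q : List BTree) (m : ℕ)
    (hp : (forestWords p).length = m) (hq : (forestWords q).length = m)
    (σ : Equiv.Perm (Fin m))
    (hσ : ∃ c : Fin m, ∀ i : Fin m, σ i = i + c)
    (h : ∀ i : Fin m,
      (forestWords p).get (Fin.cast hp.symm i) = (forestWords q).get (Fin.cast hq.symm (σ i))) :
    p.length = q.length ∧
      ∃ a : ℕ, ∀ j : ℕ, j < p.length →
        p.getD j BTree.leaf = q.getD ((j + a) % q.length) BTree.leaf := by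
  obtain ⟨c, hc⟩ := hσ
  set Lp := (p.map pw).flatten with hLp
  set Lq := (q.map pw).flatten with hLq
  have hfp : forestWords p = Lp.map emb := forestWords_eq_map_emb p
  have hfq : forestWords q = Lq.map emb := forestWords_eq_map_emb q
  have hlp : Lp.length = m := by
    have := hp; rw [hfp, List.length_map] at this; exact this
  have hlq : Lq.length = m := by
    have := hq; rw [hfq, List.length_map] at this; exact this
  rcases Nat.eq_zero_or_pos m with rfl | hm
  · -- empty case
    have hp0 : p = [] := flatten_pw_eq_nil (List.length_eq_zero_iff.1 hlp)
    have hq0 : q = [] := flatten_pw_eq_nil (List.length_eq_zero_iff.1 hlq)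
    subst hp0; subst hq0
    exact ⟨rfl, 0, fun j hj => absurd hj (by simp)⟩
  -- main case
  have hrot : Lp = Lq.rotate c.val := by
    apply List.ext_get
    · rw [hlp, List.length_rotate, hlq]
    intro i h1 h2
    have h1' : i < m := by rwa [hlp] at h1
    have hi := h ⟨i, h1'⟩
    simp only [List.get_eq_getElem, Fin.coe_cast] at hi
    simp only [hfp, hfq, List.getElem_map] at hi
    have hi2 := emb_injective hi
    simp only [List.get_eq_getElem, List.getElem_rotate]
    have hidx : ((σ ⟨i, h1'⟩ : Fin m) : ℕ) = (i + c.val) % Lq.length := by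
      rw [hc, Fin.add_def, hlq]
    convert hi2 using 2
    exact hidx.symm
  have hpne : p ≠ [] := by
    rintro rfl
    simp [hLp] at hlp
    omega
  obtain ⟨w, hwlast, hw⟩ := flatten_getLast p hpne
  rw [← hLp] at hwlast
  have hcle : c.val ≤ Lq.length := by rw [hlq]; exact c.isLt.le
  have hrot' : Lq.rotate c.val = Lq.drop c.val ++ Lq.take c.val :=
    List.rotate_eq_drop_append_take hcle
  set X := Lq.take c.val with hX
  set Y := Lq.drop c.val with hY
  have hsplit : Lq = X ++ Y := (List.take_append_drop _ _).symm
  have hcond : X = [] ∨ ∃ w, X.getLast? = some w ∧ allb w := by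
    rcases eq_or_ne X [] with hXnil | hXne
    · exact Or.inl hXnil
    · refine Or.inr ⟨w, ?_, hw⟩
      rw [hrot, hrot', List.getLast?_append_of_ne_nil _ hXne] at hwlast
      exact hwlast
  obtain ⟨q₁, q₂, hq12, hX1, hY1⟩ := boundary_split q X Y hsplit hcond
  have hpq : p = q₂ ++ q₁ := by
    apply flatten_pw_injective
    rw [← hLp, hrot, hrot', hX1, hY1, List.map_append, List.flatten_append]
  have haLe : q₁.length ≤ q.length := by rw [hq12]; simp
  have hqrot : q.rotate q₁.length = q₂ ++ q₁ := by
    rw [List.rotate_eq_drop_append_take haLe, hq12, List.drop_left, List.take_left]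
  have hpq' : p = q.rotate q₁.length := by rw [hpq, hqrot]
  have hlen : p.length = q.length := by rw [hpq']; exact List.length_rotate _ _
  refine ⟨hlen, q₁.length, fun j hj => ?_⟩
  have hqpos : 0 < q.length := by omega
  have hj' : j < (q.rotate q₁.length).length := by rwa [List.length_rotate, ← hlen]
  have hmod : (j + q₁.length) % q.length < q.length := Nat.mod_lt _ hqpos
  rw [List.getD_eq_getElem _ _ hj, List.getD_eq_getElem _ _ hmod]
  calc p[j]'hj = (q.rotate q₁.length)[j]'hj' := by
        congr 1
      _ = q[(j + q₁.length) % q.length]'hmod := List.getElem_rotate _ _ _ hj'
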